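/- Fix T > 0. Let (λ_k)_{k≥1} and (μ_k)_{k≥1} be sequences of real numbers such that λ_k → +∞, μ_k² / λ_k → 0 as k → ∞, and μ_k² < 4λ_k for every k. For each k set ℓ_k = √(λ_k − μ_k²/4) and f_k(t) = e^{μ_k t/2}·sin(ℓ_k t)/ℓ_k. Define E : ℝ → ℝ by E(x) = (e^x − 1)/x for x ≠ 0 and E(0) = 1. Then the integrals ∫_0^T f_k(s)² ds satisfy lim_{k→∞} (2λ_k / (T·E(T·μ_k))) · ∫_0^T f_k(s)² ds = 1; equivalently, ∫_0^T f_k(s)² ds is asymptotically equivalent to (e^{μ_k T} − 1)/(2 μ_k λ_k) as k → ∞. -/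

import Mathlib

open Filter intervalIntegral

open Real


noncomputable def Haux (m L lm s : ℝ) : ℝ :=
  Real.exp (m*s) * (m * Real.cos (2*L*s) + 2*L*Real.sin (2*L*s)) / (4*lm)

lemma Haux_deriv (m L lm : ℝ) (h : m^2 + 4*L^2 = 4*lm) (hlm : lm ≠ 0) (s : ℝ) :
    HasDerivAt (fun s => Haux m L lm s) (Real.exp (m*s) * Real.cos (2*L*s)) s := by
  have he : HasDerivAt (fun s : ℝ => Real.exp (m*s)) (Real.exp (m*s) * m) s := by
    simpa using ((hasDerivAt_id s).const_mul m).exp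
  have hc : HasDerivAt (fun s : ℝ => Real.cos (2*L*s)) (-Real.sin (2*L*s) * (2*L)) s := by
    simpa using ((hasDerivAt_id s).const_mul (2*L)).cos
  have hs : HasDerivAt (fun s : ℝ => Real.sin (2*L*s)) (Real.cos (2*L*s) * (2*L)) s := by
    simpa using ((hasDerivAt_id s).const_mul (2*L)).sin
  have := ((he.mul ((hc.const_mul m).add (hs.const_mul (2*L)))).div_const (4*lm))
  refine HasDerivAt.congr_deriv this ?_
  symm
  simp only [Pi.add_apply]
  rw [eq_div_iff (by intro hc0; apply hlm; linarith [mul_eq_zero.mp hc0] : (4:ℝ)*lm ≠ 0)]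
  linear_combination (-(Real.exp (m*s) * Real.cos (2*L*s))) * h

lemma int_exp (m T : ℝ) (hm : m ≠ 0) :
    ∫ s in (0:ℝ)..T, Real.exp (m*s) = (Real.exp (m*T) - 1)/m := by
  have h : ∀ s ∈ Set.uIcc (0:ℝ) T, HasDerivAt (fun s => Real.exp (m*s)/m) (Real.exp (m*s)) s := by
    intro s _
    have he : HasDerivAt (fun s : ℝ => Real.exp (m*s)) (Real.exp (m*s) * m) s := by
      simpa using ((hasDerivAt_id s).const_mul m).exp
    simpa [mul_div_assoc, mul_div_cancel_right₀ _ hm] using he.div_const m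
  rw [intervalIntegral.integral_eq_sub_of_hasDerivAt h
    ((Real.continuous_exp.comp (continuous_const.mul continuous_id)).intervalIntegrable 0 T)]
  simp [sub_div]

lemma int_exp_cos (m L lm T : ℝ) (h : m^2 + 4*L^2 = 4*lm) (hlm : lm ≠ 0) :
    ∫ s in (0:ℝ)..T, Real.exp (m*s) * Real.cos (2*L*s)
      = Haux m L lm T - Haux m L lm 0 :=
  intervalIntegral.integral_eq_sub_of_hasDerivAt
    (fun s _ => Haux_deriv m L lm h hlm s)
    (((Real.continuous_exp.comp (continuous_const.mul continuous_id)).mul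
      (Real.continuous_cos.comp (continuous_const.mul continuous_id))).intervalIntegrable 0 T)

lemma integral_f_sq (m L lm T : ℝ) (hL2 : L^2 = lm - m^2/4) (hL0 : 0 < L) (hlm : 0 < lm) :
    ∫ s in (0:ℝ)..T, (Real.exp (m*s/2) * Real.sin (L*s) / L)^2
      = ((∫ s in (0:ℝ)..T, Real.exp (m*s)) - (Haux m L lm T - Haux m L lm 0)) / (2*L^2) := by
  have hpt : ∀ s : ℝ, (Real.exp (m*s/2) * Real.sin (L*s) / L)^2
      = (Real.exp (m*s) - Real.exp (m*s) * Real.cos (2*L*s))/(2*L^2) := by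
    intro s
    have h1 : Real.exp (m*s/2) ^ 2 = Real.exp (m*s) := by
      rw [sq, ← Real.exp_add]; ring_nf
    have h2 : Real.cos (2*L*s) = 1 - 2 * Real.sin (L*s)^2 := by
      rw [show 2*L*s = 2*(L*s) by ring, Real.cos_two_mul, Real.sin_sq]; ring
    rw [div_pow, mul_pow, h1, h2]
    field_simp
    ring
  have h4 : m^2 + 4*L^2 = 4*lm := by rw [hL2]; ring
  have hi1 : IntervalIntegrable (fun s => Real.exp (m*s)) MeasureTheory.volume 0 T :=
    (Real.continuous_exp.comp (continuous_const.mul continuous_id)).intervalIntegrable 0 T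
  have hi2 : IntervalIntegrable (fun s => Real.exp (m*s) * Real.cos (2*L*s))
      MeasureTheory.volume 0 T :=
    ((Real.continuous_exp.comp (continuous_const.mul continuous_id)).mul
      (Real.continuous_cos.comp (continuous_const.mul continuous_id))).intervalIntegrable 0 T
  calc ∫ s in (0:ℝ)..T, (Real.exp (m*s/2) * Real.sin (L*s) / L)^2
      = ∫ s in (0:ℝ)..T, (Real.exp (m*s) - Real.exp (m*s) * Real.cos (2*L*s))/(2*L^2) := by
        simp_rw [hpt]
    _ = (∫ s in (0:ℝ)..T, (Real.exp (m*s) - Real.exp (m*s) * Real.cos (2*L*s)))/(2*L^2) :=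
        intervalIntegral.integral_div _ _
    _ = _ := by rw [intervalIntegral.integral_sub hi1 hi2, int_exp_cos m L lm T h4 hlm.ne']

lemma key_lb (T m : ℝ) (hT : 0 < T) :
    max 1 (Real.exp (m*T)) ≤ (1/T + |m|) * ∫ s in (0:ℝ)..T, Real.exp (m*s) := by
  rcases lt_trichotomy m 0 with hm|hm|hm
  · rw [int_exp m T hm.ne, abs_of_neg hm]
    have he : (-(m*T)) + 1 ≤ Real.exp (-(m*T)) := Real.add_one_le_exp _
    have hinv : Real.exp (m*T) * Real.exp (-(m*T)) = 1 := by rw [← Real.exp_add]; simp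
    have h1 : Real.exp (m*T) ≤ 1 :=
      Real.exp_le_one_iff.mpr (by nlinarith)
    rw [max_eq_left h1]
    have hmT : 0 < (-m)*T := mul_pos (neg_pos.mpr hm) hT
    have hform : (1/T + -m) * ((Real.exp (m*T) - 1)/m)
        = ((1 + (-m)*T)*(1 - Real.exp (m*T)))/((-m)*T) := by
      field_simp; ring
    rw [hform, le_div_iff₀ hmT]
    nlinarith [mul_le_mul_of_nonneg_left he (Real.exp_pos (m*T)).le, hinv]
  · subst hm
    simp only [zero_mul, Real.exp_zero, abs_zero, add_zero, max_self]
    rw [intervalIntegral.integral_const]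
    simp
    try rw [inv_mul_cancel₀ hT.ne']
  · rw [int_exp m T hm.ne', abs_of_pos hm]
    have he : m*T + 1 ≤ Real.exp (m*T) := Real.add_one_le_exp _
    have hmT : 0 < m*T := mul_pos hm hT
    have h1 : (1:ℝ) ≤ Real.exp (m*T) := by nlinarith
    rw [max_eq_right h1]
    have hform : (1/T + m) * ((Real.exp (m*T) - 1)/m)
        = ((1 + m*T)*(Real.exp (m*T) - 1))/(m*T) := by
      field_simp
      try ring_nf
      try tauto
    rw [hform, le_div_iff₀ hmT]
    nlinarith [he]
/-- For `λ_k → +∞`, `μ_k²/λ_k → 0`, `μ_k² < 4λ_k`, and the fundamental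
solutions `f_k(t) = e^{μ_k t/2} sin(ℓ_k t)/ℓ_k` with `ℓ_k = √(λ_k - μ_k²/4)`, the
integrals satisfy `(2λ_k/(T E(T μ_k))) ∫₀ᵀ f_k(s)² ds → 1`, where
`E(x) = (e^x - 1)/x`, `E(0) = 1`. -/
theorem stmt_19 (T : ℝ) (hT : 0 < T) (lam mu : ℕ → ℝ)
    (hlam : Tendsto lam atTop atTop)
    (hmu : Tendsto (fun k => (mu k) ^ 2 / lam k) atTop (nhds 0))
    (hlt : ∀ k, (mu k) ^ 2 < 4 * lam k)
    (ell : ℕ → ℝ) (hell : ∀ k, ell k = Real.sqrt (lam k - (mu k) ^ 2 / 4))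
    (f : ℕ → ℝ → ℝ)
    (hf : ∀ k, ∀ t : ℝ, f k t = Real.exp (mu k * t / 2) * Real.sin (ell k * t) / ell k)
    (E : ℝ → ℝ) (hE : ∀ x : ℝ, x ≠ 0 → E x = (Real.exp x - 1) / x) (hE0 : E 0 = 1) :
    Tendsto (fun k =>
        (2 * lam k / (T * E (T * mu k))) * ∫ s in (0 : ℝ)..T, (f k s) ^ 2)
      atTop (nhds 1) := by
  -- basic positivity facts
  have hlam_pos : ∀ k, 0 < lam k := fun k => by nlinarith [hlt k, sq_nonneg (mu k)]
  have hdiff_pos : ∀ k, 0 < lam k - (mu k)^2/4 := fun k => by nlinarith [hlt k]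
  have hL0 : ∀ k, 0 < ell k := fun k => by
    rw [hell k]; exact Real.sqrt_pos.mpr (hdiff_pos k)
  have hL2 : ∀ k, (ell k)^2 = lam k - (mu k)^2/4 := fun k => by
    rw [hell k]; exact Real.sq_sqrt (hdiff_pos k).le
  set Ik : ℕ → ℝ := fun k => ∫ s in (0:ℝ)..T, Real.exp (mu k * s) with hIk
  set Ck : ℕ → ℝ := fun k =>
    Haux (mu k) (ell k) (lam k) T - Haux (mu k) (ell k) (lam k) 0 with hCk
  -- I is positive
  have hKpos : ∀ k, 0 < 1/T + |mu k| := fun k => by positivity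
  have hkey : ∀ k, max 1 (Real.exp (mu k * T)) ≤ (1/T + |mu k|) * Ik k :=
    fun k => key_lb T (mu k) hT
  have hIpos : ∀ k, 0 < Ik k := by
    intro k
    have h1 : (1:ℝ) ≤ (1/T + |mu k|) * Ik k := le_trans (le_max_left _ _) (hkey k)
    nlinarith [hKpos k]
  -- T * E (T * mu k) = Ik k
  have hIT : ∀ k, T * E (T * mu k) = Ik k := by
    intro k
    rcases eq_or_ne (mu k) 0 with h0|h0
    · rw [h0, mul_zero, hE0, mul_one, hIk]
      simp only [h0, zero_mul, Real.exp_zero]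
      rw [intervalIntegral.integral_const]
      simp
    · rw [hE (T * mu k) (mul_ne_zero hT.ne' h0), hIk]
      simp only
      rw [int_exp (mu k) T h0]
      rw [show T * mu k = mu k * T by ring]
      field_simp
      try ring
  -- the integral identity
  have hint : ∀ k, (∫ s in (0:ℝ)..T, (f k s)^2) = (Ik k - Ck k)/(2*(ell k)^2) := by
    intro k
    have : ∀ s : ℝ, (f k s)^2 = (Real.exp (mu k * s/2) * Real.sin (ell k * s) / ell k)^2 :=
      fun s => by rw [hf k s]
    calc (∫ s in (0:ℝ)..T, (f k s)^2)
        = ∫ s in (0:ℝ)..T, (Real.exp (mu k * s/2) * Real.sin (ell k * s) / ell k)^2 := by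
          simp_rw [this]
      _ = (Ik k - Ck k)/(2*(ell k)^2) :=
          integral_f_sq (mu k) (ell k) (lam k) T (hL2 k) (hL0 k) (hlam_pos k)
  -- bound on |Ck|
  have hCb : ∀ k, |Ck k| ≤ (1/T + |mu k|) * Ik k * (|mu k| + ell k) / (2 * lam k) := by
    intro k
    have h4lm : (0:ℝ) < 4 * lam k := by linarith [hlam_pos k]
    have hCeq : Ck k = (Real.exp (mu k * T) * (mu k * Real.cos (2 * ell k * T)
        + 2 * ell k * Real.sin (2 * ell k * T)) - mu k) / (4 * lam k) := by
      rw [hCk]; simp only [Haux, mul_zero, Real.cos_zero, Real.sin_zero]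
      rw [Real.exp_zero]
      ring
    have hnum : |Real.exp (mu k * T) * (mu k * Real.cos (2 * ell k * T)
        + 2 * ell k * Real.sin (2 * ell k * T)) - mu k|
        ≤ Real.exp (mu k * T) * (|mu k| + 2 * ell k) + |mu k| := by
      have h1 : |mu k * Real.cos (2 * ell k * T) + 2 * ell k * Real.sin (2 * ell k * T)|
          ≤ |mu k| + 2 * ell k := by
        calc |mu k * Real.cos (2 * ell k * T) + 2 * ell k * Real.sin (2 * ell k * T)|
            ≤ |mu k * Real.cos (2 * ell k * T)| + |2 * ell k * Real.sin (2 * ell k * T)| :=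
              abs_add_le _ _
          _ ≤ |mu k| + 2 * ell k := by
              rw [abs_mul, abs_mul]
              have := Real.abs_cos_le_one (2 * ell k * T)
              have := Real.abs_sin_le_one (2 * ell k * T)
              have h2 : |(2:ℝ) * ell k| = 2 * ell k := abs_of_pos (by linarith [hL0 k])
              nlinarith [abs_nonneg (mu k), hL0 k]
      calc |Real.exp (mu k * T) * (mu k * Real.cos (2 * ell k * T)
          + 2 * ell k * Real.sin (2 * ell k * T)) - mu k|
          ≤ |Real.exp (mu k * T) * (mu k * Real.cos (2 * ell k * T)
            + 2 * ell k * Real.sin (2 * ell k * T))| + |mu k| := abs_sub _ _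
        _ ≤ Real.exp (mu k * T) * (|mu k| + 2 * ell k) + |mu k| := by
            rw [abs_mul, abs_of_pos (Real.exp_pos _)]
            have := Real.exp_pos (mu k * T)
            nlinarith
    have hKIe : Real.exp (mu k * T) ≤ (1/T + |mu k|) * Ik k :=
      le_trans (le_max_right _ _) (hkey k)
    have hKI1 : (1:ℝ) ≤ (1/T + |mu k|) * Ik k := le_trans (le_max_left _ _) (hkey k)
    calc |Ck k| = |Real.exp (mu k * T) * (mu k * Real.cos (2 * ell k * T)
          + 2 * ell k * Real.sin (2 * ell k * T)) - mu k| / (4 * lam k) := by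
          rw [hCeq, abs_div, abs_of_pos h4lm]
      _ ≤ ((1/T + |mu k|) * Ik k * (|mu k| + 2 * ell k)
          + (1/T + |mu k|) * Ik k * |mu k|) / (4 * lam k) := by
          apply div_le_div_of_nonneg_right ?_ h4lm.le
          calc |Real.exp (mu k * T) * (mu k * Real.cos (2 * ell k * T)
              + 2 * ell k * Real.sin (2 * ell k * T)) - mu k|
              ≤ Real.exp (mu k * T) * (|mu k| + 2 * ell k) + |mu k| := hnum
            _ ≤ (1/T + |mu k|) * Ik k * (|mu k| + 2 * ell k)
                + (1/T + |mu k|) * Ik k * |mu k| := by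
                have h2 : (0:ℝ) ≤ |mu k| + 2 * ell k := by
                  have := abs_nonneg (mu k); linarith [hL0 k]
                have e1 := mul_le_mul_of_nonneg_right hKIe h2
                have e2 := mul_le_mul_of_nonneg_right hKI1 (abs_nonneg (mu k))
                rw [one_mul] at e2
                linarith
      _ = (1/T + |mu k|) * Ik k * (|mu k| + ell k) / (2 * lam k) := by ring
  -- limit machinery
  have hsqrt0 : Tendsto (fun k => |mu k| / Real.sqrt (lam k)) atTop (nhds 0) := by
    have h1 : Tendsto (fun k => Real.sqrt ((mu k)^2 / lam k)) atTop (nhds 0) := by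
      have := (Real.continuous_sqrt.tendsto' 0 0 Real.sqrt_zero).comp hmu
      exact this
    have h2 : (fun k => Real.sqrt ((mu k)^2 / lam k))
        = fun k => |mu k| / Real.sqrt (lam k) := by
      funext k
      rw [Real.sqrt_div (sq_nonneg _), Real.sqrt_sq_eq_abs]
    rwa [h2] at h1
  have hinvs : Tendsto (fun k => 1 / Real.sqrt (lam k)) atTop (nhds 0) := by
    have h1 : Tendsto (fun k => Real.sqrt ((lam k)⁻¹)) atTop (nhds 0) := by
      exact (Real.continuous_sqrt.tendsto' 0 0 Real.sqrt_zero).comp hlam.inv_tendsto_atTop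
    have h2 : (fun k => Real.sqrt ((lam k)⁻¹)) = fun k => 1 / Real.sqrt (lam k) := by
      funext k; rw [Real.sqrt_inv, one_div]
    rwa [h2] at h1
  have hLle : ∀ k, ell k ≤ Real.sqrt (lam k) := fun k => by
    rw [hell k]; exact Real.sqrt_le_sqrt (by nlinarith [sq_nonneg (mu k)])
  have hss : ∀ k, Real.sqrt (lam k) / lam k = 1 / Real.sqrt (lam k) := fun k =>
    Real.sqrt_div_self'
  have t1 : Tendsto (fun k => |mu k| / lam k) atTop (nhds 0) := by
    have heq : (fun k => |mu k| / lam k)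
        = fun k => (|mu k| / Real.sqrt (lam k)) * (1 / Real.sqrt (lam k)) := by
      funext k
      rw [div_mul_div_comm, mul_one, Real.mul_self_sqrt (hlam_pos k).le]
    rw [heq]
    simpa using hsqrt0.mul hinvs
  have t3 : Tendsto (fun k => ell k / lam k) atTop (nhds 0) := by
    apply squeeze_zero (fun k => div_nonneg (hL0 k).le (hlam_pos k).le) ?_ hinvs
    intro k
    rw [← hss k]
    exact div_le_div_of_nonneg_right (hLle k) (hlam_pos k).le
  have t4 : Tendsto (fun k => |mu k| * ell k / lam k) atTop (nhds 0) := by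
    apply squeeze_zero
      (fun k => div_nonneg (mul_nonneg (abs_nonneg _) (hL0 k).le) (hlam_pos k).le) ?_ hsqrt0
    intro k
    calc |mu k| * ell k / lam k ≤ |mu k| * Real.sqrt (lam k) / lam k :=
          div_le_div_of_nonneg_right
            (mul_le_mul_of_nonneg_left (hLle k) (abs_nonneg _)) (hlam_pos k).le
      _ = |mu k| / Real.sqrt (lam k) := by rw [mul_div_assoc, hss k, mul_one_div]
  have hg : Tendsto (fun k => (1/T + |mu k|) * (|mu k| + ell k) / (2 * lam k))
      atTop (nhds 0) := by
    have heq : (fun k => (1/T + |mu k|) * (|mu k| + ell k) / (2 * lam k))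
        = fun k => ((1/T) * (|mu k| / lam k) + (1/T) * (ell k / lam k)
            + (mu k)^2 / lam k + |mu k| * ell k / lam k) / 2 := by
      funext k
      have habs : (mu k)^2 = |mu k| * |mu k| := by rw [abs_mul_abs_self, sq]
      simp only [div_eq_mul_inv]
      rw [habs]
      ring
    rw [heq]
    have := ((((t1.const_mul (1/T)).add (t3.const_mul (1/T))).add hmu).add t4).div_const 2
    simpa using this
  have hB : Tendsto (fun k => Ck k / Ik k) atTop (nhds 0) := by
    apply squeeze_zero_norm ?_ hg
    intro k
    rw [Real.norm_eq_abs, abs_div, abs_of_pos (hIpos k), div_le_iff₀ (hIpos k)]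
    calc |Ck k| ≤ (1/T + |mu k|) * Ik k * (|mu k| + ell k) / (2 * lam k) := hCb k
      _ = (1/T + |mu k|) * (|mu k| + ell k) / (2 * lam k) * Ik k := by ring
  have hA : Tendsto (fun k => lam k / (ell k)^2) atTop (nhds 1) := by
    have heq : (fun k => lam k / (ell k)^2)
        = fun k => (1 - ((mu k)^2 / lam k)/4)⁻¹ := by
      funext k
      have h1 : lam k - (mu k)^2/4 ≠ 0 := (hdiff_pos k).ne'
      have h2 : lam k ≠ 0 := (hlam_pos k).ne'
      rw [hL2 k]
      field_simp
      try ring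
    rw [heq]
    have := (tendsto_const_nhds.sub (hmu.div_const 4)).inv₀
      (by norm_num : (1:ℝ) - 0/4 ≠ 0)
    simpa using this
  have hfinal : (fun k => (2 * lam k / (T * E (T * mu k))) * ∫ s in (0:ℝ)..T, (f k s)^2)
      = fun k => (lam k / (ell k)^2) * (1 - Ck k / Ik k) := by
    funext k
    rw [hint k, hIT k]
    have h1 : Ik k ≠ 0 := (hIpos k).ne'
    have h2 : ell k ≠ 0 := (hL0 k).ne'
    field_simp
    try ring
  rw [hfinal]
  have h1 : Tendsto (fun k => 1 - Ck k / Ik k) atTop (nhds (1 - 0)) :=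
    (tendsto_const_nhds : Tendsto (fun _ : ℕ => (1:ℝ)) atTop (nhds 1)).sub hB
  have := hA.mul h1
  simpa using this
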